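/- Let n be a nonzero real number and define K on the open set U = {(x, y) ∈ ℝ² : |y| < x} by K(x, y) = sgn(n)·xⁿ/(x² − y²)ⁿ. Then the determinant of the Hessian matrix of K equals 2n²(n + 1)·x^{2n−2}/(x² − y²)^{2n+1} at every point of U. -/

import Mathlib

/-- Partial derivative with respect to the first variable. -/
noncomputable def pdx (f : ℝ × ℝ → ℝ) (p : ℝ × ℝ) : ℝ := fderiv ℝ f p (1, 0)

/-- Partial derivative with respect to the second variable. -/
noncomputable def pdy (f : ℝ × ℝ → ℝ) (p : ℝ × ℝ) : ℝ := fderiv ℝ f p (0, 1)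

/-- The Hessian matrix of second partial derivatives. -/
noncomputable def hessian (f : ℝ × ℝ → ℝ) (p : ℝ × ℝ) : Matrix (Fin 2) (Fin 2) ℝ :=
  !![pdx (pdx f) p, pdx (pdy f) p;
     pdy (pdx f) p, pdy (pdy f) p]

lemma F_hasDeriv (a b : ℝ) {p : ℝ × ℝ} (hx : 0 < p.1) (hd : 0 < p.1 ^ 2 - p.2 ^ 2) :
    ∃ L : ℝ × ℝ →L[ℝ] ℝ,
      HasFDerivAt (fun q : ℝ × ℝ => q.1 ^ a * (q.1 ^ 2 - q.2 ^ 2) ^ b) L p ∧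
      L (1, 0) = a * p.1 ^ (a-1) * (p.1^2-p.2^2) ^ b + 2*b*p.1^a*p.1*(p.1^2-p.2^2) ^ (b-1) ∧
      L (0, 1) = -(2*b*p.2*p.1^a*(p.1^2-p.2^2) ^ (b-1)) := by
  have h1 : HasFDerivAt (fun q : ℝ × ℝ => q.1 ^ a)
      ((a * p.1 ^ (a-1)) • ContinuousLinearMap.fst ℝ ℝ ℝ) p :=
    (Real.hasDerivAt_rpow_const (Or.inl hx.ne')).comp_hasFDerivAt p hasFDerivAt_fst
  have hD : HasFDerivAt (fun q : ℝ × ℝ => q.1 ^ 2 - q.2 ^ 2)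
      ((p.1 • ContinuousLinearMap.fst ℝ ℝ ℝ + p.1 • ContinuousLinearMap.fst ℝ ℝ ℝ)
        - (p.2 • ContinuousLinearMap.snd ℝ ℝ ℝ + p.2 • ContinuousLinearMap.snd ℝ ℝ ℝ)) p := by
    have h := (hasFDerivAt_fst.mul hasFDerivAt_fst (𝕜 := ℝ) (x := p)).sub
      (hasFDerivAt_snd.mul hasFDerivAt_snd (𝕜 := ℝ) (x := p))
    refine h.congr_of_eventuallyEq (Filter.Eventually.of_forall fun q => ?_)
    · simp only [Pi.sub_apply, Pi.mul_apply]; ring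
  have h2 := (Real.hasDerivAt_rpow_const (p := b) (Or.inl hd.ne')).comp_hasFDerivAt p hD
  refine ⟨_, h1.mul h2, ?_, ?_⟩ <;> simp <;> ring

lemma facts {q : ℝ × ℝ} (h : |q.2| < q.1) : 0 < q.1 ∧ 0 < q.1 ^ 2 - q.2 ^ 2 :=
  ⟨(abs_nonneg _).trans_lt h, by nlinarith [abs_nonneg q.2, sq_abs q.2]⟩

/-- The Hessian determinant of powers of mean curvature `K = sgn(n)·xⁿ/(x²−y²)ⁿ` equals
`2n²(n+1)·x^{2n−2}/(x²−y²)^{2n+1}` on `U = {(x,y) : |y| < x}`. -/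
theorem powers_of_mean_curvature_hessian_det (n : ℝ) (hn : n ≠ 0)
    (K : ℝ × ℝ → ℝ)
    (hK : K = fun q : ℝ × ℝ => Real.sign n * q.1 ^ n / (q.1 ^ 2 - q.2 ^ 2) ^ n) :
    ∀ p : ℝ × ℝ, |p.2| < p.1 →
      (hessian K p).det =
        2 * n ^ 2 * (n + 1) * p.1 ^ (2 * n - 2) / (p.1 ^ 2 - p.2 ^ 2) ^ (2 * n + 1) := by
  intro p hp
  set s : ℝ := Real.sign n with hs
  obtain ⟨hx, hd⟩ := facts hp
  have hU : IsOpen {q : ℝ × ℝ | |q.2| < q.1} :=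
    isOpen_lt (continuous_abs.comp continuous_snd) continuous_fst
  -- first partial derivatives on U
  set Kx : ℝ × ℝ → ℝ := fun q =>
    s*n*(q.1 ^ (n-1) * (q.1^2-q.2^2) ^ (-n)) + (-2*s*n)*(q.1*(q.1 ^ n * (q.1^2-q.2^2) ^ (-n-1)))
    with hKx_def
  set Ky : ℝ × ℝ → ℝ := fun q =>
    (2*s*n)*(q.2*(q.1 ^ n * (q.1^2-q.2^2) ^ (-n-1))) with hKy_def
  have claimA : ∀ q : ℝ × ℝ, |q.2| < q.1 → pdx K q = Kx q ∧ pdy K q = Ky q := by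
    intro q hq
    obtain ⟨hxq, hdq⟩ := facts hq
    obtain ⟨L, hL, e1, e2⟩ := F_hasDeriv n (-n) hxq hdq
    have hKF : HasFDerivAt K (s • L) q := by
      refine (hL.const_mul s).congr_of_eventuallyEq ?_
      filter_upwards [hU.mem_nhds hq] with r hr
      obtain ⟨hxr, hdr⟩ := facts hr
      rw [hK]
      simp only [Real.rpow_neg hdr.le]
      ring
    constructor
    · rw [pdx, hKF.fderiv]
      simp only [ContinuousLinearMap.smul_apply, smul_eq_mul, e1, hKx_def]
      ring
    · rw [pdy, hKF.fderiv]
      simp only [ContinuousLinearMap.smul_apply, smul_eq_mul, e2, hKy_def]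
      ring
  have hxe : pdx K =ᶠ[nhds p] Kx := by
    filter_upwards [hU.mem_nhds hp] with r hr using (claimA r hr).1
  have hye : pdy K =ᶠ[nhds p] Ky := by
    filter_upwards [hU.mem_nhds hp] with r hr using (claimA r hr).2
  -- second derivatives
  obtain ⟨L1, h1, e11, e12⟩ := F_hasDeriv (n-1) (-n) hx hd
  obtain ⟨L2, h2, e21, e22⟩ := F_hasDeriv n (-n-1) hx hd
  have hKxD : HasFDerivAt Kx
      ((s*n) • L1 + (-2*s*n) • (p.1 • L2 +
        (p.1 ^ n * (p.1^2-p.2^2) ^ (-n-1)) • ContinuousLinearMap.fst ℝ ℝ ℝ)) p := by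
    exact (h1.const_mul (s*n)).add ((hasFDerivAt_fst.mul h2).const_mul (-2*s*n))
  have hKyD : HasFDerivAt Ky
      ((2*s*n) • (p.2 • L2 +
        (p.1 ^ n * (p.1^2-p.2^2) ^ (-n-1)) • ContinuousLinearMap.snd ℝ ℝ ℝ)) p := by
    exact (hasFDerivAt_snd.mul h2).const_mul (2*s*n)
  have H11 : pdx (pdx K) p =
      s*n*((n-1) * p.1 ^ (n-1-1) * (p.1^2-p.2^2) ^ (-n) + 2*(-n)*p.1^(n-1)*p.1*(p.1^2-p.2^2) ^ (-n-1))
      + (-2*s*n)*(p.1*(n * p.1 ^ (n-1) * (p.1^2-p.2^2) ^ (-n-1) + 2*(-n-1)*p.1^n*p.1*(p.1^2-p.2^2) ^ (-n-1-1))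
        + p.1 ^ n * (p.1^2-p.2^2) ^ (-n-1)) := by
    rw [pdx, hxe.fderiv_eq, hKxD.fderiv]
    simp only [ContinuousLinearMap.add_apply, ContinuousLinearMap.smul_apply, smul_eq_mul,
      ContinuousLinearMap.coe_fst', e11, e21]
    ring
  have H21 : pdy (pdx K) p =
      s*n*(-(2*(-n)*p.2*p.1^(n-1)*(p.1^2-p.2^2) ^ (-n-1)))
      + (-2*s*n)*(p.1*(-(2*(-n-1)*p.2*p.1^n*(p.1^2-p.2^2) ^ (-n-1-1)))) := by
    rw [pdy, hxe.fderiv_eq, hKxD.fderiv]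
    simp only [ContinuousLinearMap.add_apply, ContinuousLinearMap.smul_apply, smul_eq_mul,
      ContinuousLinearMap.coe_fst', e12, e22]
    ring
  have H12 : pdx (pdy K) p =
      (2*s*n)*(p.2*(n * p.1 ^ (n-1) * (p.1^2-p.2^2) ^ (-n-1) + 2*(-n-1)*p.1^n*p.1*(p.1^2-p.2^2) ^ (-n-1-1))) := by
    rw [pdx, hye.fderiv_eq, hKyD.fderiv]
    simp only [ContinuousLinearMap.add_apply, ContinuousLinearMap.smul_apply, smul_eq_mul,
      ContinuousLinearMap.coe_snd', e21]
    ring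
  have H22 : pdy (pdy K) p =
      (2*s*n)*(p.2*(-(2*(-n-1)*p.2*p.1^n*(p.1^2-p.2^2) ^ (-n-1-1)))
        + p.1 ^ n * (p.1^2-p.2^2) ^ (-n-1)) := by
    rw [pdy, hye.fderiv_eq, hKyD.fderiv]
    simp only [ContinuousLinearMap.add_apply, ContinuousLinearMap.smul_apply, smul_eq_mul,
      ContinuousLinearMap.coe_snd', e22]
    ring
  rw [hessian, Matrix.det_fin_two_of, H11, H12, H21, H22]
  rw [show n-1-1 = n-2 by ring, show -n-1-1 = -n-2 by ring]
  have e1 : p.1 ^ (n-1) = p.1 ^ (n-2) * p.1 := by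
    rw [show n-1 = (n-2)+1 by ring, Real.rpow_add_one hx.ne']
  have e2 : p.1 ^ n = p.1 ^ (n-2) * p.1 * p.1 := by
    rw [← Real.rpow_add_one hx.ne', ← Real.rpow_add_one hx.ne']
    congr 1; ring
  have e3 : p.1 ^ (2*n-2) = p.1 ^ (n-2) * p.1 ^ (n-2) * p.1 * p.1 := by
    rw [show 2*n-2 = (((n-2)+(n-2))+1)+1 by ring, Real.rpow_add_one hx.ne',
      Real.rpow_add_one hx.ne', Real.rpow_add hx]
  have f1 : (p.1^2-p.2^2) ^ (-n-1) = (p.1^2-p.2^2) ^ (-n-2) * (p.1^2-p.2^2) := by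
    rw [show -n-1 = (-n-2)+1 by ring, Real.rpow_add_one hd.ne']
  have f2 : (p.1^2-p.2^2) ^ (-n) = (p.1^2-p.2^2) ^ (-n-2) * (p.1^2-p.2^2) * (p.1^2-p.2^2) := by
    rw [← Real.rpow_add_one hd.ne', ← Real.rpow_add_one hd.ne']
    congr 1; ring
  have f3 : (p.1^2-p.2^2) ^ (2*n+1) =
      ((p.1^2-p.2^2) ^ (-n-2) * (p.1^2-p.2^2) ^ (-n-2) *
        ((p.1^2-p.2^2)*(p.1^2-p.2^2)*(p.1^2-p.2^2)))⁻¹ := by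
    rw [show (2*n+1:ℝ) = -((-n-2)+((-n-2)+3)) by ring, Real.rpow_neg hd.le,
      Real.rpow_add hd, Real.rpow_add hd]
    congr 1
    rw [show (3:ℝ) = ((3:ℕ):ℝ) by norm_num, Real.rpow_natCast]
    ring
  rw [e1, e2, e3, f1, f2, f3]
  have hB : (0:ℝ) < (p.1^2-p.2^2) ^ (-n-2) := Real.rpow_pos_of_pos hd _
  rcases hn.lt_or_gt with h|h
  · rw [hs, Real.sign_of_neg h]
    field_simp
    ring
  · rw [hs, Real.sign_of_pos h]
    field_simp
    ring
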